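/- (Backward induction lemma.) Let (e_t^y)_{t≥0} and (e_t^o)_{t≥0} be sequences of strictly positive reals, γ > 0, m > 0, and T ≥ 0. Call a sequence (S_t)_{t≥T} an equilibrium tail from T if 0 < S_t < e_t^y for all t ≥ T and S_{t+1}·c_z(y_t,z_t) = S_t·c_y(y_t,z_t) − m·c(y_t,z_t)^γ for all t ≥ T, where (y_t,z_t) := (e_t^y − S_t, e_{t+1}^o + S_{t+1}). Then for every equilibrium tail (S_t)_{t≥T} from T there exists a unique equilibrium tail (Ŝ_t)_{t≥0} from 0 such that Ŝ_t = S_t for all t ≥ T. -/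

import Mathlib

open Real Filter Set Topology

/-- Assumption C: `c` is a positive, homogeneous of degree 1, twice continuously
differentiable function on `(0,∞)²` with partial derivatives `cy, cz > 0`, second partial
derivatives `cyy, czz < 0`, and Inada conditions. -/
structure AssumptionC (c cy cz cyy cyz czz : ℝ → ℝ → ℝ) : Prop where
  c_pos : ∀ ⦃y z : ℝ⦄, 0 < y → 0 < z → 0 < c y z
  homog : ∀ ⦃l y z : ℝ⦄, 0 < l → 0 < y → 0 < z → c (l * y) (l * z) = l * c y z
  hderiv_y : ∀ ⦃y z : ℝ⦄, 0 < y → 0 < z → HasDerivAt (fun u => c u z) (cy y z) y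
  hderiv_z : ∀ ⦃y z : ℝ⦄, 0 < y → 0 < z → HasDerivAt (fun v => c y v) (cz y z) z
  hderiv_yy : ∀ ⦃y z : ℝ⦄, 0 < y → 0 < z → HasDerivAt (fun u => cy u z) (cyy y z) y
  hderiv_yz : ∀ ⦃y z : ℝ⦄, 0 < y → 0 < z → HasDerivAt (fun v => cy y v) (cyz y z) z
  hderiv_zy : ∀ ⦃y z : ℝ⦄, 0 < y → 0 < z → HasDerivAt (fun u => cz u z) (cyz y z) y
  hderiv_zz : ∀ ⦃y z : ℝ⦄, 0 < y → 0 < z → HasDerivAt (fun v => cz y v) (czz y z) z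
  cy_pos : ∀ ⦃y z : ℝ⦄, 0 < y → 0 < z → 0 < cy y z
  cz_pos : ∀ ⦃y z : ℝ⦄, 0 < y → 0 < z → 0 < cz y z
  cyy_neg : ∀ ⦃y z : ℝ⦄, 0 < y → 0 < z → cyy y z < 0
  czz_neg : ∀ ⦃y z : ℝ⦄, 0 < y → 0 < z → czz y z < 0
  cont2 : ContinuousOn (fun p : ℝ × ℝ => (cyy p.1 p.2, cyz p.1 p.2, czz p.1 p.2))
    {p : ℝ × ℝ | 0 < p.1 ∧ 0 < p.2}
  inada_y : ∀ ⦃z : ℝ⦄, 0 < z → Tendsto (fun y => cy y z) (𝓝[>] (0:ℝ)) atTop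
  inada_z : ∀ ⦃y : ℝ⦄, 0 < y → Tendsto (fun z => cz y z) (𝓝[>] (0:ℝ)) atTop

/-- `S` is an equilibrium tail from `T`: for all `t ≥ T`, `0 < S_t < e_t^y` and
`S_{t+1}·c_z = S_t·c_y − m·c^γ` at `(y_t,z_t) = (e_t^y − S_t, e_{t+1}^o + S_{t+1})`. -/
def EqTail (c cy cz : ℝ → ℝ → ℝ) (ey eo : ℕ → ℝ) (γ m : ℝ) (T : ℕ) (S : ℕ → ℝ) : Prop :=
  ∀ t : ℕ, T ≤ t → 0 < S t ∧ S t < ey t ∧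
    S (t + 1) * cz (ey t - S t) (eo (t + 1) + S (t + 1)) =
      S t * cy (ey t - S t) (eo (t + 1) + S (t + 1)) -
        m * c (ey t - S t) (eo (t + 1) + S (t + 1)) ^ γ

variable {c cy cz cyy cyz czz : ℝ → ℝ → ℝ}

/-- `cy` is homogeneous of degree 0. -/
lemma cy_homog (hC : AssumptionC c cy cz cyy cyz czz) {l y z : ℝ}
    (hl : 0 < l) (hy : 0 < y) (hz : 0 < z) : cy (l * y) (l * z) = cy y z := by
  have hF : HasDerivAt (fun u => c (l * u) (l * z)) (cy (l * y) (l * z) * l) y := by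
    have h1 : HasDerivAt (fun u : ℝ => l * u) l y := by
      simpa using (hasDerivAt_id y).const_mul l
    exact (hC.hderiv_y (by positivity) (by positivity)).comp y h1
  have hG : HasDerivAt (fun u => l * c u z) (l * cy y z) y :=
    (hC.hderiv_y hy hz).const_mul l
  have hEq : (fun u => l * c u z) =ᶠ[𝓝 y] (fun u => c (l * u) (l * z)) := by
    filter_upwards [isOpen_Ioi.mem_nhds hy] with u hu
    exact (hC.homog hl hu hz).symm
  have h2 := (hF.congr_of_eventuallyEq hEq).unique hG
  have h3 : cy (l * y) (l * z) * l = cy y z * l := by linarith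
  exact mul_right_cancel₀ hl.ne' h3

/-- `cz` is homogeneous of degree 0. -/
lemma cz_homog (hC : AssumptionC c cy cz cyy cyz czz) {l y z : ℝ}
    (hl : 0 < l) (hy : 0 < y) (hz : 0 < z) : cz (l * y) (l * z) = cz y z := by
  have hF : HasDerivAt (fun v => c (l * y) (l * v)) (cz (l * y) (l * z) * l) z := by
    have h1 : HasDerivAt (fun v : ℝ => l * v) l z := by
      simpa using (hasDerivAt_id z).const_mul l
    exact (hC.hderiv_z (by positivity) (by positivity)).comp z h1
  have hG : HasDerivAt (fun v => l * c y v) (l * cz y z) z :=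
    (hC.hderiv_z hy hz).const_mul l
  have hEq : (fun v => l * c y v) =ᶠ[𝓝 z] (fun v => c (l * y) (l * v)) := by
    filter_upwards [isOpen_Ioi.mem_nhds hz] with v hv
    exact (hC.homog hl hy hv).symm
  have h2 := (hF.congr_of_eventuallyEq hEq).unique hG
  have h3 : cz (l * y) (l * z) * l = cz y z * l := by linarith
  exact mul_right_cancel₀ hl.ne' h3

/-- The cross partial derivative is positive. -/
lemma cyz_pos (hC : AssumptionC c cy cz cyy cyz czz) {y z : ℝ}
    (hy : 0 < y) (hz : 0 < z) : 0 < cyz y z := by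
  -- cy y z = cy (y/z) 1 for z > 0; differentiate in z.
  have hF : HasDerivAt (fun v : ℝ => cy (y / v) 1) (cyy (y / z) 1 * (-(y / z ^ 2))) z := by
    have h1 : HasDerivAt (fun v : ℝ => y / v) (-(y / z ^ 2)) z := by
      simpa [div_eq_mul_inv, sq] using ((hasDerivAt_inv (ne_of_gt hz)).const_mul y)
    exact (hC.hderiv_yy (by positivity) one_pos).comp z h1
  have hG : HasDerivAt (fun v => cy y v) (cyz y z) z := hC.hderiv_yz hy hz
  have hEq : (fun v => cy y v) =ᶠ[𝓝 z] (fun v : ℝ => cy (y / v) 1) := by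
    filter_upwards [isOpen_Ioi.mem_nhds hz] with v hv
    have h := cy_homog hC hv (div_pos hy hv) one_pos
    have hv' : (0:ℝ) < v := hv
    have hvy : v * (y / v) = y := by
      field_simp
    rw [hvy, mul_one] at h
    exact h
  have huniq := (hF.congr_of_eventuallyEq hEq).unique hG
  rw [← huniq]
  have h1 : cyy (y / z) 1 < 0 := hC.cyy_neg (by positivity) one_pos
  have h2 : -(y / z ^ 2) < 0 := neg_neg_iff_pos.mpr (by positivity)
  exact mul_pos_of_neg_of_neg h1 h2

/-- `c` is strictly monotone in its first argument. -/
lemma c_monoY (hC : AssumptionC c cy cz cyy cyz czz) {z : ℝ} (hz : 0 < z) :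
    StrictMonoOn (fun y => c y z) (Ioi 0) := by
  apply strictMonoOn_of_deriv_pos (convex_Ioi 0)
  · intro y hy
    exact (hC.hderiv_y hy hz).continuousAt.continuousWithinAt
  · intro y hy
    rw [interior_Ioi] at hy
    rw [(hC.hderiv_y hy hz).deriv]
    exact hC.cy_pos hy hz

/-- `cz` is strictly antitone in its second argument. -/
lemma cz_antiZ (hC : AssumptionC c cy cz cyy cyz czz) {y : ℝ} (hy : 0 < y) :
    StrictAntiOn (fun z => cz y z) (Ioi 0) := by
  apply strictAntiOn_of_deriv_neg (convex_Ioi 0)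
  · intro z hz
    exact (hC.hderiv_zz hy hz).continuousAt.continuousWithinAt
  · intro z hz
    rw [interior_Ioi] at hz
    rw [(hC.hderiv_zz hy hz).deriv]
    exact hC.czz_neg hy hz

/-- The one-step backward equation. -/
def StepEq (c cy cz : ℝ → ℝ → ℝ) (γ m E Zo s' s : ℝ) : Prop :=
  0 < s ∧ s < E ∧ s' * cz (E - s) (Zo + s') =
    s * cy (E - s) (Zo + s') - m * c (E - s) (Zo + s') ^ γ

/-- One-step backward induction: unique solution of the equilibrium equation. -/
lemma step_lemma (hC : AssumptionC c cy cz cyy cyz czz) {γ m : ℝ} (hγ : 0 < γ)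
    (hm : 0 < m) {E Zo s' : ℝ} (hE : 0 < E) (hZo : 0 < Zo) (hs' : 0 < s') :
    ∃! s : ℝ, StepEq c cy cz γ m E Zo s' s := by
  set z : ℝ := Zo + s' with hzdef
  have hz : 0 < z := by positivity
  set f : ℝ → ℝ := fun s => s * cy (E - s) z - m * c (E - s) z ^ γ - s' * cz (E - s) z
    with hfdef
  -- the derivative of f
  have hderiv : ∀ s : ℝ, s < E → HasDerivAt f
      (1 * cy (E - s) z + s * (cyy (E - s) z * (-1))
        - m * (γ * c (E - s) z ^ (γ - 1) * (cy (E - s) z * (-1)))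
        - s' * (cyz (E - s) z * (-1))) s := by
    intro s hsE
    have hy : 0 < E - s := by linarith
    have h1 : HasDerivAt (fun s : ℝ => E - s) (-1) s := by
      simpa using (hasDerivAt_id s).const_sub E
    have hcy : HasDerivAt (fun s : ℝ => cy (E - s) z) (cyy (E - s) z * (-1)) s :=
      (hC.hderiv_yy hy hz).comp s h1
    have hcc : HasDerivAt (fun s : ℝ => c (E - s) z) (cy (E - s) z * (-1)) s :=
      (hC.hderiv_y hy hz).comp s h1
    have hpow : HasDerivAt (fun s : ℝ => c (E - s) z ^ γ)
        (γ * c (E - s) z ^ (γ - 1) * (cy (E - s) z * (-1))) s :=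
      by have h := (Real.hasDerivAt_rpow_const (p := γ) (Or.inl (hC.c_pos hy hz).ne')).comp s hcc; exact h
    have hcz : HasDerivAt (fun s : ℝ => cz (E - s) z) (cyz (E - s) z * (-1)) s :=
      (hC.hderiv_zy hy hz).comp s h1
    exact (((hasDerivAt_id s).mul hcy).sub (hpow.const_mul m)).sub (hcz.const_mul s')
  -- positivity of the derivative on [0, E)
  have hderiv_pos : ∀ s : ℝ, 0 ≤ s → s < E →
      0 < 1 * cy (E - s) z + s * (cyy (E - s) z * (-1))
        - m * (γ * c (E - s) z ^ (γ - 1) * (cy (E - s) z * (-1)))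
        - s' * (cyz (E - s) z * (-1)) := by
    intro s hs0 hsE
    have hy : 0 < E - s := by linarith
    have h1 := hC.cy_pos hy hz
    have h2 := hC.cyy_neg hy hz
    have h3 := cyz_pos hC hy hz
    have h4 : 0 < c (E - s) z ^ (γ - 1) := Real.rpow_pos_of_pos (hC.c_pos hy hz) _
    have h5 : 0 ≤ s * (cyy (E - s) z * (-1)) := by nlinarith
    have hA : 0 < m * (γ * c (E - s) z ^ (γ - 1) * cy (E - s) z) := by positivity
    have hB : 0 < s' * cyz (E - s) z := mul_pos hs' h3
    nlinarith [hA, hB, h5, h1]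
  -- continuity of f on [0, E)
  have hcont : ∀ s : ℝ, s < E → ContinuousAt f s := fun s hsE =>
    (hderiv s hsE).continuousAt
  -- strict monotonicity of f on [0, E)
  have hmono : StrictMonoOn f (Ico 0 E) := by
    apply strictMonoOn_of_deriv_pos (convex_Ico 0 E)
    · exact fun s hs => (hcont s hs.2).continuousWithinAt
    · intro s hs
      rw [interior_Ico] at hs
      rw [(hderiv s hs.2).deriv]
      exact hderiv_pos s hs.1.le hs.2
  -- f 0 < 0
  have hf0 : f 0 < 0 := by
    have h1 : 0 < c (E - 0) z ^ γ := Real.rpow_pos_of_pos (hC.c_pos (by linarith) hz) _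
    have h2 := hC.cz_pos (show 0 < E - 0 by linarith) hz
    simp only [hfdef, zero_mul, zero_sub]
    nlinarith
  -- f is eventually positive near E from the left
  have hbound : ∀ s : ℝ, E / 2 ≤ s → s < E →
      E / 2 * cy (E - s) z - (m * c E z ^ γ + s' * cz 1 (2 * z / E)) ≤ f s := by
    intro s hs1 hs2
    have hy : 0 < E - s := by linarith
    have hyE2 : E - s ≤ E / 2 := by linarith
    have hcyp := hC.cy_pos hy hz
    -- s * cy ≥ E/2 * cy
    have hA : E / 2 * cy (E - s) z ≤ s * cy (E - s) z := by nlinarith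
    -- c (E - s) z ≤ c E z
    have hB : c (E - s) z ≤ c E z :=
      (c_monoY hC hz).monotoneOn hy (by exact hE) (by linarith)
    have hB' : c (E - s) z ^ γ ≤ c E z ^ γ :=
      Real.rpow_le_rpow (hC.c_pos hy hz).le hB hγ.le
    -- cz (E - s) z = cz 1 (z / (E - s)) ≤ cz 1 (2 * z / E)
    have hC1 : cz (E - s) z = cz 1 (z / (E - s)) := by
      have h := cz_homog hC hy one_pos (div_pos hz hy)
      rw [mul_one] at h
      rw [show (E - s) * (z / (E - s)) = z by field_simp] at h
      exact h
    have hC2 : cz 1 (z / (E - s)) ≤ cz 1 (2 * z / E) := by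
      apply (cz_antiZ hC one_pos).antitoneOn
      · exact div_pos (by positivity) hE
      · exact div_pos hz hy
      · rw [div_le_div_iff₀ hE hy]
        nlinarith
    have hmc : 0 < m * c E z ^ γ - m * c (E - s) z ^ γ + m * c (E - s) z ^ γ := by
      have := Real.rpow_pos_of_pos (hC.c_pos hy hz) γ
      nlinarith
    simp only [hfdef]
    have hs'cz : s' * cz (E - s) z ≤ s' * cz 1 (2 * z / E) := by
      rw [hC1]; nlinarith
    nlinarith [mul_le_mul_of_nonneg_left hB' hm.le]
  -- existence of a point where f is positive
  have hex : ∃ s₁ : ℝ, 0 < s₁ ∧ s₁ < E ∧ 0 < f s₁ := by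
    have hmap : Tendsto (fun s : ℝ => E - s) (𝓝[<] E) (𝓝[>] (0:ℝ)) := by
      rw [tendsto_nhdsWithin_iff]
      constructor
      · have : Tendsto (fun s : ℝ => E - s) (𝓝 E) (𝓝 (E - E)) :=
          (tendsto_const_nhds.sub tendsto_id)
        rw [sub_self] at this
        exact this.mono_left nhdsWithin_le_nhds
      · filter_upwards [self_mem_nhdsWithin] with s hs
        exact mem_Ioi.mpr (sub_pos.mpr (mem_Iio.mp hs))
    have hT : Tendsto (fun s : ℝ => cy (E - s) z) (𝓝[<] E) atTop :=
      (hC.inada_y hz).comp hmap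
    have hT2 := tendsto_atTop_add_const_right (𝓝[<] E)
      (-(m * c E z ^ γ + s' * cz 1 (2 * z / E)))
      (Tendsto.const_mul_atTop (show (0:ℝ) < E / 2 by positivity) hT)
    have h1 : ∀ᶠ s in 𝓝[<] E,
        0 < E / 2 * cy (E - s) z - (m * c E z ^ γ + s' * cz 1 (2 * z / E)) := by
      have := hT2.eventually_gt_atTop 0
      filter_upwards [this] with s hs
      linarith [hs]
    have h2 : Ioo (E / 2) E ∈ 𝓝[<] E := Ioo_mem_nhdsLT (by linarith)
    rcases ((h1.and h2).exists) with ⟨s₁, hpos, hs₁⟩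
    exact ⟨s₁, by linarith [hs₁.1], hs₁.2,
      lt_of_lt_of_le hpos (hbound s₁ hs₁.1.le hs₁.2)⟩
  rcases hex with ⟨s₁, hs₁0, hs₁E, hfs₁⟩
  -- intermediate value theorem
  have hivt : ∃ s₀ ∈ Ioo 0 s₁, f s₀ = 0 := by
    have hconts : ContinuousOn f (Icc 0 s₁) := fun s hs =>
      (hcont s (lt_of_le_of_lt hs.2 hs₁E)).continuousWithinAt
    have := intermediate_value_Ioo hs₁0.le hconts
    rcases this ⟨hf0, hfs₁⟩ with ⟨s₀, hs₀, hfs₀⟩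
    exact ⟨s₀, hs₀, hfs₀⟩
  rcases hivt with ⟨s₀, hs₀, hfs₀⟩
  have hkey : ∀ s : ℝ, StepEq c cy cz γ m E Zo s' s ↔ (s ∈ Ico 0 E ∧ 0 < s ∧ f s = 0) := by
    intro s
    constructor
    · rintro ⟨h1, h2, h3⟩
      refine ⟨⟨h1.le, h2⟩, h1, ?_⟩
      simp only [hfdef]
      rw [← hzdef] at h3
      linarith
    · rintro ⟨h1, h2, h3⟩
      refine ⟨h2, h1.2, ?_⟩
      simp only [hfdef] at h3
      rw [← hzdef]
      linarith
  refine ⟨s₀, (hkey s₀).mpr ⟨⟨hs₀.1.le, lt_trans hs₀.2 hs₁E⟩, hs₀.1, hfs₀⟩,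
    fun s hs => ?_⟩
  have hss := (hkey s).mp hs
  exact hmono.injOn hss.1 ⟨hs₀.1.le, lt_trans hs₀.2 hs₁E⟩ (by rw [hss.2.2, hfs₀])

/-- Backward induction lemma: every equilibrium tail from `T` extends uniquely to an
equilibrium tail from `0`. -/
theorem stmt_6 (c cy cz cyy cyz czz : ℝ → ℝ → ℝ)
    (hC : AssumptionC c cy cz cyy cyz czz) (ey eo : ℕ → ℝ)
    (hey : ∀ t, 0 < ey t) (heo : ∀ t, 0 < eo t) (γ m : ℝ) (hγ : 0 < γ) (hm : 0 < m)
    (T : ℕ) (S : ℕ → ℝ) (hS : EqTail c cy cz ey eo γ m T S) :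
    ∃! Shat : ℕ → ℝ, EqTail c cy cz ey eo γ m 0 Shat ∧ ∀ t : ℕ, T ≤ t → Shat t = S t := by
  classical
  -- one-step existence and uniqueness at each time with given next value
  have step : ∀ (t : ℕ) (s' : ℝ), 0 < s' →
      ∃! s : ℝ, StepEq c cy cz γ m (ey t) (eo (t + 1)) s' s := fun t s' hs' =>
    step_lemma hC hγ hm (hey t) (heo (t + 1)) hs'
  -- the backward sequence: V n is the value at time T - n
  let V : ℕ → ℝ := fun n => Nat.rec (S T)
    (fun n ih => if h : 0 < ih then Classical.choose (step (T - (n + 1)) ih h) else 0) n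
  have hV0 : V 0 = S T := rfl
  have hVpos : ∀ n, 0 < V n := by
    intro n
    induction n with
    | zero => exact (hS T le_rfl).1
    | succ n ihn =>
      have : V (n + 1) = Classical.choose (step (T - (n + 1)) (V n) ihn) := by
        simp only [V]
        rw [dif_pos ihn]
      rw [this]
      exact (Classical.choose_spec (step (T - (n + 1)) (V n) ihn)).1.1
  have hVsucc : ∀ n, StepEq c cy cz γ m (ey (T - (n + 1))) (eo (T - (n + 1) + 1))
      (V n) (V (n + 1)) := by
    intro n
    have heq : V (n + 1) = Classical.choose (step (T - (n + 1)) (V n) (hVpos n)) := by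
      simp only [V]
      rw [dif_pos (hVpos n)]
    rw [heq]
    exact (Classical.choose_spec (step (T - (n + 1)) (V n) (hVpos n))).1
  -- the extended sequence
  set Shat : ℕ → ℝ := fun t => if T ≤ t then S t else V (T - t) with hShatdef
  have hShat_ge : ∀ t, T ≤ t → Shat t = S t := fun t ht => if_pos ht
  have hShat_lt : ∀ t, t < T → Shat t = V (T - t) := fun t ht => if_neg (not_le.mpr ht)
  have hShat_next : ∀ t, t < T → Shat (t + 1) = V (T - t - 1) := by
    intro t ht
    rcases le_or_gt T (t + 1) with h | h
    · have ht1 : t + 1 = T := by omega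
      have h0 : T - t - 1 = 0 := by omega
      rw [hShat_ge (t + 1) h, ht1, h0, hV0]
    · rw [hShat_lt (t + 1) h, show T - (t + 1) = T - t - 1 by omega]
  -- Shat is an equilibrium tail from 0
  have hEq0 : EqTail c cy cz ey eo γ m 0 Shat := by
    intro t _
    rcases le_or_gt T t with ht | ht
    · rw [hShat_ge t ht, hShat_ge (t + 1) (le_trans ht (Nat.le_succ t))]
      exact hS t ht
    · obtain ⟨n, hn1⟩ : ∃ n, n + 1 = T - t := ⟨T - t - 1, by omega⟩
      have hTt : T - (n + 1) = t := by omega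
      have hspec := hVsucc n
      rw [hTt] at hspec
      rw [hShat_lt t ht, hShat_next t ht, show T - t - 1 = n by omega,
        show T - t = n + 1 from hn1.symm]
      exact hspec
  -- uniqueness
  refine ⟨Shat, ⟨hEq0, hShat_ge⟩, ?_⟩
  rintro S' ⟨hS'Eq, hS'tail⟩
  have hkey : ∀ k, k ≤ T → S' (T - k) = Shat (T - k) := by
    intro k
    induction k with
    | zero =>
      intro _
      simp only [Nat.sub_zero]
      rw [hS'tail T le_rfl, hShat_ge T le_rfl]
    | succ k ih =>
      intro hk
      have hkT : k ≤ T := by omega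
      have ihk := ih hkT
      set t : ℕ := T - (k + 1) with htdef
      have htT : t < T := by omega
      have ht1 : t + 1 = T - k := by omega
      have hnext : S' (t + 1) = Shat (t + 1) := by rw [ht1]; exact ihk
      -- next value positivity
      have hpos' : 0 < Shat (t + 1) := (hEq0 (t + 1) (Nat.zero_le _)).1
      have huniq := step t (Shat (t + 1)) hpos'
      have h1 : StepEq c cy cz γ m (ey t) (eo (t + 1)) (Shat (t + 1)) (S' t) := by
        have h := hS'Eq t (Nat.zero_le t)
        rw [hnext] at h
        exact ⟨h.1, h.2.1, h.2.2⟩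
      have h2 : StepEq c cy cz γ m (ey t) (eo (t + 1)) (Shat (t + 1)) (Shat t) := by
        have h := hEq0 t (Nat.zero_le t)
        exact ⟨h.1, h.2.1, h.2.2⟩
      exact huniq.unique h1 h2
  funext t
  rcases le_or_gt T t with ht | ht
  · rw [hS'tail t ht, hShat_ge t ht]
  · have h := hkey (T - t) (by omega)
    have : T - (T - t) = t := by omega
    rw [this] at h
    exact h
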